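/- arXiv:0809.2345 — 4 statements merged into one kernel-verified Lean document; each statement's English description precedes it below -/
import Mathlib

section
/- Let z₁ ∈ 𝔻 with z₁ ≠ 0 and w₁ ∈ ℂ with |w₁| < 1. Then: (i) there exists s ∈ 𝒮₁ with s(z₁) = w₁; (ii) the set {x ∈ ℂ : ℙ_x is positive semidefinite} equals the closed disk {x ∈ ℂ : |x − c| ≤ r}, where c = w₁·(1 − |z₁|⁴)/(1 − |z₁|⁴·|w₁|²) and r = |z₁|²·(1 − |w₁|²)/(1 − |z₁|⁴·|w₁|²); (iii) ℙ_x is positive definite if and only if |x − c| < r. -/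
open scoped ComplexConjugate ComplexOrder
open Matrix

noncomputable section

namespace CNP

def unitDisk : Set ℂ := {z : ℂ | ‖z‖ < 1}

def MemS1 (s : ℂ → ℂ) : Prop :=
  DifferentiableOn ℂ s unitDisk ∧ (∀ z ∈ unitDisk, ‖s z‖ ≤ 1) ∧ deriv s 0 = 0

def Kab (α β z w : ℂ) : ℂ :=
  (α + β * z) * conj (α + β * w) + z ^ 2 * conj w ^ 2 / (1 - z * conj w)

def opNormM {m n : Type*} [Fintype m] [Fintype n] [DecidableEq n] (A : Matrix m n ℂ) : ℝ :=
  ‖LinearMap.toContinuousLinearMap (Matrix.toEuclideanLin A)‖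

def matDeriv {k l : ℕ} (F : ℂ → Matrix (Fin k) (Fin l) ℂ) (w : ℂ) : Matrix (Fin k) (Fin l) ℂ :=
  Matrix.of fun i j => deriv (fun z => F z i j) w

def matHol {k l : ℕ} (F : ℂ → Matrix (Fin k) (Fin l) ℂ) : Prop :=
  ∀ i j, DifferentiableOn ℂ (fun z => F z i j) unitDisk

def MemS1M {k : ℕ} (S : ℂ → Matrix (Fin k) (Fin k) ℂ) : Prop :=
  matHol S ∧ (∀ z ∈ unitDisk, opNormM (S z) ≤ 1) ∧ matDeriv S 0 = 0

def MemG {l l' : ℕ} (α β : Matrix (Fin l') (Fin l) ℂ) : Prop :=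
  α * αᴴ + β * βᴴ = 1 ∧ Function.Injective α.mulVec

def KabM {l l' : ℕ} (α β : Matrix (Fin l') (Fin l) ℂ) (z w : ℂ) : Matrix (Fin l) (Fin l) ℂ :=
  (αᴴ + conj w • βᴴ) * (α + z • β) + (conj w ^ 2 * z ^ 2 / (1 - conj w * z)) • 1

def taylorCoeff {k l : ℕ} (F : ℂ → Matrix (Fin k) (Fin l) ℂ) (m : ℕ) :
    Matrix (Fin k) (Fin l) ℂ :=
  Matrix.of fun i j => iteratedDeriv m (fun z => F z i j) 0 / m.factorial

def frobSq {k l : ℕ} (A : Matrix (Fin k) (Fin l) ℂ) : ℝ :=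
  ∑ i, ∑ j, Complex.normSq (A i j)

def MemH2 {k l : ℕ} (F : ℂ → Matrix (Fin k) (Fin l) ℂ) : Prop :=
  matHol F ∧ Summable fun m => frobSq (taylorCoeff F m)

def h2inner {k l : ℕ} (F G : ℂ → Matrix (Fin k) (Fin l) ℂ) : ℂ :=
  ∑' m : ℕ, Matrix.trace ((taylorCoeff G m)ᴴ * taylorCoeff F m)

def h2norm {k l : ℕ} (F : ℂ → Matrix (Fin k) (Fin l) ℂ) : ℝ :=
  Real.sqrt (∑' m : ℕ, frobSq (taylorCoeff F m))

def MemH2ab {k l l' : ℕ} (α β : Matrix (Fin l') (Fin l) ℂ)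
    (F : ℂ → Matrix (Fin k) (Fin l) ℂ) : Prop :=
  MemH2 F ∧ ∃ U : Matrix (Fin k) (Fin l') ℂ, F 0 = U * α ∧ matDeriv F 0 = U * β

def MemHinf {k l : ℕ} (F : ℂ → Matrix (Fin k) (Fin l) ℂ) : Prop :=
  matHol F ∧ ∃ C : ℝ, ∀ z ∈ unitDisk, opNormM (F z) ≤ C

def hinfNorm {k l : ℕ} (F : ℂ → Matrix (Fin k) (Fin l) ℂ) : ℝ :=
  sSup ((fun z => opNormM (F z)) '' unitDisk)

def MemHinf1 {k : ℕ} (S : ℂ → Matrix (Fin k) (Fin k) ℂ) : Prop :=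
  MemHinf S ∧ matDeriv S 0 = 0

def blaschke {m : ℕ} (lam : Fin m → ℂ) (r : Fin m → ℕ) (z : ℂ) : ℂ :=
  ∏ i, ((z - lam i) / (1 - conj (lam i) * z)) ^ r i

def BD {n : ℕ} (z : Fin n → ℂ) (ζ : ℂ) : ℂ :=
  ∏ i, (ζ - z i) / (1 - conj (z i) * ζ)


/-- The 5×5 Pick matrix `ℙ_x` for the one-point constrained problem. -/
def P8 (z₁ w₁ x : ℂ) : Matrix (Fin 5) (Fin 5) ℂ :=
  !![((1 - ‖w₁‖ ^ 2 : ℝ) : ℂ) / ((1 - ‖z₁‖ ^ 2 : ℝ) : ℂ),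
        1 - w₁ * conj x, z₁ * (1 - w₁ * conj x), 0, 0;
     1 - conj w₁ * x, 1, 0, x, 0;
     conj z₁ * (1 - conj w₁ * x), 0, 1, 0, x;
     0, conj x, 0, 1, 0;
     0, 0, conj x, 0, 1]

open Complex in
lemma nsq_lt_one_ {a : ℂ} (h : ‖a‖ < 1) : normSq a < 1 := by
  rw [← Complex.sq_norm]; nlinarith [norm_nonneg a]

open Complex in
lemma denom_ne {a b : ℂ} (h : ‖a‖ < 1) (h2 : ‖b‖ < 1) : 1 - conj a * b ≠ 0 := by
  intro h3
  have e : (1:ℂ) = conj a * b := sub_eq_zero.mp h3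
  have : ‖conj a * b‖ = 1 := by rw [← e]; simp
  rw [norm_mul, Complex.norm_conj] at this
  nlinarith [norm_nonneg a, norm_nonneg b]
open Complex in
lemma mobius_lt {a b : ℂ} (h : ‖a‖ < 1) (h2 : ‖b‖ < 1) :
    ‖(a - b) / (1 - conj a * b)‖ < 1 := by
  rw [norm_div, div_lt_one (norm_pos_iff.mpr (denom_ne h h2))]
  have hn : normSq (a - b) < normSq (1 - conj a * b) := by
    have ha := nsq_lt_one_ h
    have hb := nsq_lt_one_ h2
    simp only [normSq_apply, Complex.sub_re, Complex.sub_im, Complex.mul_re, Complex.mul_im,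
      Complex.one_re, Complex.one_im, Complex.conj_re, Complex.conj_im] at *
    nlinarith [sq_nonneg (a.re - b.re), sq_nonneg (a.im - b.im)]
  rw [Complex.norm_def, Complex.norm_def]
  exact Real.sqrt_lt_sqrt (normSq_nonneg _) hn
open Complex in
noncomputable def gmob (a w : ℂ) : ℂ := (a - w) / (1 - conj a * w)
open Complex in
lemma gmob_diff {a b : ℂ} (h : ‖a‖ < 1) (h2 : ‖b‖ < 1) :
    DifferentiableAt ℂ (gmob a) b := by
  apply DifferentiableAt.div
  · fun_prop
  · fun_prop
  · exact denom_ne h h2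
open Complex in
lemma part1 (z₁ w₁ : ℂ) (hz : ‖z₁‖ < 1) (hw : ‖w₁‖ < 1) :
    ∃ s : ℂ → ℂ, MemS1 s ∧ s z₁ = w₁ := by
  have hz2 : ‖z₁ ^ 2‖ < 1 := by
    rw [norm_pow]; nlinarith [norm_nonneg z₁]
  refine ⟨fun z => gmob w₁ (gmob (z₁ ^ 2) (z ^ 2)), ⟨?_, ?_, ?_⟩, ?_⟩
  · intro z hzd
    have hzd' : ‖z‖ < 1 := hzd
    have h1 : ‖z ^ 2‖ < 1 := by
      rw [norm_pow]; nlinarith [norm_nonneg z]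
    have h2 : ‖gmob (z₁ ^ 2) (z ^ 2)‖ < 1 := mobius_lt hz2 h1
    exact (((gmob_diff hw h2).comp z ((gmob_diff hz2 h1).comp z
      (differentiableAt_pow 2))).differentiableWithinAt)
  · intro z hzd
    have hzd' : ‖z‖ < 1 := hzd
    have h1 : ‖z ^ 2‖ < 1 := by
      rw [norm_pow]; nlinarith [norm_nonneg z]
    exact le_of_lt (mobius_lt hw (mobius_lt hz2 h1))
  · have h1 : ‖(0:ℂ) ^ 2‖ < 1 := by norm_num
    have hd : DifferentiableAt ℂ (gmob w₁ ∘ gmob (z₁ ^ 2)) ((0:ℂ)^2) :=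
      DifferentiableAt.comp ((0:ℂ)^2) (gmob_diff hw (mobius_lt hz2 h1)) (gmob_diff hz2 h1)
    have hsq : HasDerivAt (fun z : ℂ => z ^ 2) (2 * (0:ℂ) ^ 1) 0 := hasDerivAt_pow 2 0
    have hcomp := hd.hasDerivAt.comp 0 hsq
    have h0 : deriv ((gmob w₁ ∘ gmob (z₁ ^ 2)) ∘ fun z : ℂ => z ^ 2) 0
        = deriv (gmob w₁ ∘ gmob (z₁ ^ 2)) ((0:ℂ)^2) * (2 * 0 ^ 1) := hcomp.deriv
    have : (fun z : ℂ => gmob w₁ (gmob (z₁ ^ 2) (z ^ 2)))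
        = (gmob w₁ ∘ gmob (z₁ ^ 2)) ∘ fun z : ℂ => z ^ 2 := rfl
    rw [this, h0]; ring
  · show gmob w₁ (gmob (z₁ ^ 2) (z₁ ^ 2)) = w₁
    have : gmob (z₁ ^ 2) (z₁ ^ 2) = 0 := by simp [gmob]
    rw [this]; simp [gmob]


open Complex in
lemma Did (z₁ w₁ x : ℂ) :
    (1 - normSq z₁ ^ 2 * normSq w₁) *
      ((1 - normSq w₁) * (1 - normSq x) - (1 - normSq z₁ ^ 2) * normSq (1 - w₁ * conj x))
    = (normSq z₁ * (1 - normSq w₁)) ^ 2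
      - normSq (((1 - normSq z₁ ^ 2 * normSq w₁ : ℝ) : ℂ) * x
          - w₁ * ((1 - normSq z₁ ^ 2 : ℝ) : ℂ)) := by
  simp only [normSq_apply, Complex.sub_re, Complex.sub_im, Complex.mul_re, Complex.mul_im,
    Complex.one_re, Complex.one_im, Complex.conj_re, Complex.conj_im, Complex.ofReal_re,
    Complex.ofReal_im]
  ring
open Complex in
lemma aux_scal (D G r N : ℝ) (hD : 0 < D) (hr0 : 0 ≤ r) (hN : 0 ≤ N)
    (hkey : D * G = (D * r) ^ 2 - D ^ 2 * N) :
    (0 ≤ G ↔ N ≤ r ^ 2) ∧ (0 < G ↔ N < r ^ 2) := by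
  constructor
  · constructor
    · intro h; nlinarith [mul_pos hD hD]
    · intro h; nlinarith [mul_pos hD hD]
  · constructor
    · intro h; nlinarith [mul_pos hD hD]
    · intro h; nlinarith [mul_pos hD hD]
open Complex in
lemma diskiff (z₁ w₁ : ℂ) (hz : ‖z₁‖ < 1) (hw : ‖w₁‖ < 1)
    (c : ℂ) (r : ℝ)
    (hc : c = w₁ * ((1 - ‖z₁‖ ^ 4 : ℝ) : ℂ) /
      ((1 - ‖z₁‖ ^ 4 * ‖w₁‖ ^ 2 : ℝ) : ℂ))
    (hr : r = ‖z₁‖ ^ 2 * (1 - ‖w₁‖ ^ 2) /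
      (1 - ‖z₁‖ ^ 4 * ‖w₁‖ ^ 2)) (x : ℂ) :
    ((0 ≤ (1 - normSq w₁) * (1 - normSq x) - (1 - normSq z₁ ^ 2) * normSq (1 - w₁ * conj x)
        ↔ ‖x - c‖ ≤ r) ∧
     (0 < (1 - normSq w₁) * (1 - normSq x) - (1 - normSq z₁ ^ 2) * normSq (1 - w₁ * conj x)
        ↔ ‖x - c‖ < r)) := by
  have h4 : ‖z₁‖ ^ 4 = normSq z₁ ^ 2 := by
    rw [show (4:ℕ) = 2*2 from rfl, pow_mul, Complex.sq_norm]
  have h2w : ‖w₁‖ ^ 2 = normSq w₁ := Complex.sq_norm w₁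
  have h2z : ‖z₁‖ ^ 2 = normSq z₁ := Complex.sq_norm z₁
  have hnz := nsq_lt_one_ hz
  have hnw := nsq_lt_one_ hw
  have hnz0 := normSq_nonneg z₁
  have hnw0 := normSq_nonneg w₁
  have hD : 0 < 1 - normSq z₁ ^ 2 * normSq w₁ := by nlinarith
  have hne : (1:ℂ) - ((normSq z₁ : ℂ))^2 * ((normSq w₁ : ℂ)) ≠ 0 := by
    intro h
    apply ne_of_gt hD
    have h' : ((1 - normSq z₁ ^ 2 * normSq w₁ : ℝ) : ℂ) = 0 := by push_cast; linear_combination h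
    exact_mod_cast h'
  have hrD : (1 - normSq z₁ ^ 2 * normSq w₁) * r = normSq z₁ * (1 - normSq w₁) := by
    rw [hr, h4, h2w, h2z]; field_simp
  have hr0 : 0 ≤ r := by nlinarith
  have hcD : ((1 - normSq z₁ ^ 2 * normSq w₁ : ℝ) : ℂ) * (x - c) =
      ((1 - normSq z₁ ^ 2 * normSq w₁ : ℝ) : ℂ) * x - w₁ * ((1 - normSq z₁ ^ 2 : ℝ) : ℂ) := by
    rw [hc, h4, h2w]
    push_cast
    field_simp
  have hDn : normSq (((1 - normSq z₁ ^ 2 * normSq w₁ : ℝ) : ℂ) * (x - c))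
      = (1 - normSq z₁ ^ 2 * normSq w₁) ^ 2 * normSq (x - c) := by
    rw [normSq_mul, normSq_ofReal]; ring
  have hkey : (1 - normSq z₁ ^ 2 * normSq w₁) * ((1 - normSq w₁) * (1 - normSq x)
      - (1 - normSq z₁ ^ 2) * normSq (1 - w₁ * conj x))
      = ((1 - normSq z₁ ^ 2 * normSq w₁) * r) ^ 2
        - (1 - normSq z₁ ^ 2 * normSq w₁) ^ 2 * normSq (x - c) := by
    rw [hrD, ← hDn, hcD]; exact Did z₁ w₁ x
  have habs : ‖x - c‖ = Real.sqrt (normSq (x - c)) := Complex.norm_def _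
  have hrs : r = Real.sqrt (r ^ 2) := (Real.sqrt_sq hr0).symm
  have hns0 := normSq_nonneg (x - c)
  constructor
  · rw [habs, hrs, Real.sqrt_le_sqrt_iff (by positivity)]
    exact (aux_scal _ _ _ _ hD hr0 hns0 hkey).1
  · rw [habs, hrs, Real.sqrt_lt_sqrt_iff (normSq_nonneg _)]
    exact (aux_scal _ _ _ _ hD hr0 hns0 hkey).2


open Complex in
lemma key (z₁ w₁ x : ℂ) (y : Fin 5 → ℂ) (he : (1 : ℂ) - z₁ * conj z₁ ≠ 0) :
    ((1 - normSq z₁ : ℝ) : ℂ) * ((1 - normSq x : ℝ) : ℂ) *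
      (star y ⬝ᵥ (P8 z₁ w₁ x).mulVec y)
    = (((1 - normSq w₁) * (1 - normSq x)
          - (1 - normSq z₁ ^ 2) * normSq (1 - w₁ * conj x)) * normSq (y 0)
        + (1 - normSq z₁) *
            (normSq ((1 - (normSq x : ℂ)) * y 1 + conj (1 - w₁ * conj x) * y 0)
              + normSq ((1 - (normSq x : ℂ)) * y 2 + conj z₁ * conj (1 - w₁ * conj x) * y 0))
        + (1 - normSq z₁) * (1 - normSq x) *
            (normSq (y 3 + conj x * y 1) + normSq (y 4 + conj x * y 2)) : ℝ) := by
  have hw' : (1 - (‖w₁‖ : ℂ) ^ 2) = 1 - w₁ * conj w₁ := by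
    rw [← Complex.ofReal_pow, Complex.sq_norm, Complex.mul_conj]
  have hz' : (1 - (‖z₁‖ : ℂ) ^ 2) = 1 - z₁ * conj z₁ := by
    rw [← Complex.ofReal_pow, Complex.sq_norm, Complex.mul_conj]
  simp only [P8, Matrix.mulVec, dotProduct, Fin.sum_univ_five]
  simp [Matrix.vecHead, Matrix.vecTail]
  push_cast [← Complex.mul_conj]
  rw [hw', hz']
  simp only [map_sub, map_add, _root_.map_mul, _root_.map_one, Complex.conj_conj]
  field_simp
  ring
open Complex in
lemma P8_herm (z₁ w₁ x : ℂ) : (P8 z₁ w₁ x).IsHermitian := by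
  unfold Matrix.IsHermitian
  ext i j
  fin_cases i <;> fin_cases j <;>
    simp [P8, Matrix.conjTranspose_apply, map_div₀, Complex.conj_ofReal, map_sub,
      _root_.map_mul, _root_.map_one, Complex.conj_conj, Matrix.vecHead, Matrix.vecTail]
open Complex in
lemma eval3 (z₁ w₁ x : ℂ) :
    star ![0, 1, 0, -conj x, 0] ⬝ᵥ (P8 z₁ w₁ x).mulVec ![0, 1, 0, -conj x, 0]
      = ((1 - normSq x : ℝ) : ℂ) := by
  simp only [P8, Matrix.mulVec, dotProduct, Fin.sum_univ_five]
  simp [Matrix.vecHead, Matrix.vecTail]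
  push_cast [← Complex.mul_conj]
  ring
open Complex in
lemma eval2 (z₁ w₁ x : ℂ) (l : ℝ) (he : (1 : ℂ) - z₁ * conj z₁ ≠ 0) :
    ((1 - normSq z₁ : ℝ) : ℂ) *
      (star ![1, -(l:ℂ) * conj (1 - w₁ * conj x), 0, (l:ℂ) * conj x * conj (1 - w₁ * conj x), 0]
        ⬝ᵥ (P8 z₁ w₁ x).mulVec
          ![1, -(l:ℂ) * conj (1 - w₁ * conj x), 0, (l:ℂ) * conj x * conj (1 - w₁ * conj x), 0])
    = (((1 - normSq w₁)
        - (1 - normSq z₁) * (2 * l - (1 - normSq x) * l ^ 2) * normSq (1 - w₁ * conj x) : ℝ) : ℂ) := by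
  have hw' : (1 - (‖w₁‖ : ℂ) ^ 2) = 1 - w₁ * conj w₁ := by
    rw [← Complex.ofReal_pow, Complex.sq_norm, Complex.mul_conj]
  have hz' : (1 - (‖z₁‖ : ℂ) ^ 2) = 1 - z₁ * conj z₁ := by
    rw [← Complex.ofReal_pow, Complex.sq_norm, Complex.mul_conj]
  simp only [P8, Matrix.mulVec, dotProduct, Fin.sum_univ_five]
  simp [Matrix.vecHead, Matrix.vecTail]
  push_cast [← Complex.mul_conj]
  rw [hw', hz']
  simp only [map_sub, map_add, _root_.map_mul, _root_.map_one, Complex.conj_conj,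
    Complex.conj_ofReal]
  field_simp
  ring
open Complex in
lemma GposIff (z₁ w₁ : ℂ) (hz : ‖z₁‖ < 1) (hw : ‖w₁‖ < 1) (x : ℂ) :
    ((P8 z₁ w₁ x).PosSemidef ↔
      0 ≤ (1 - normSq w₁) * (1 - normSq x) - (1 - normSq z₁ ^ 2) * normSq (1 - w₁ * conj x)) ∧
    ((P8 z₁ w₁ x).PosDef ↔
      0 < (1 - normSq w₁) * (1 - normSq x) - (1 - normSq z₁ ^ 2) * normSq (1 - w₁ * conj x)) := by
  have hnz := nsq_lt_one_ hz
  have hnw := nsq_lt_one_ hw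
  have hnz0 := normSq_nonneg z₁
  have hnw0 := normSq_nonneg w₁
  have hnx0 := normSq_nonneg x
  have hp0 := normSq_nonneg (1 - w₁ * conj x)
  have he2 : (0:ℝ) < 1 - normSq z₁ := by linarith
  have he : (1 : ℂ) - z₁ * conj z₁ ≠ 0 := by
    rw [Complex.mul_conj]
    intro h
    have h' : ((1 - normSq z₁ : ℝ) : ℂ) = 0 := by push_cast; linear_combination h
    have : (1 - normSq z₁ : ℝ) = 0 := by exact_mod_cast h'
    linarith
  -- notation
  set G := (1 - normSq w₁) * (1 - normSq x) - (1 - normSq z₁ ^ 2) * normSq (1 - w₁ * conj x)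
    with hGdef
  -- if normSq x < 1 then the form is the coercion of a real
  have hform : normSq x < 1 → ∀ y : Fin 5 → ℂ,
      star y ⬝ᵥ (P8 z₁ w₁ x).mulVec y =
      (((G * normSq (y 0)
        + (1 - normSq z₁) *
            (normSq ((1 - (normSq x : ℂ)) * y 1 + conj (1 - w₁ * conj x) * y 0)
              + normSq ((1 - (normSq x : ℂ)) * y 2 + conj z₁ * conj (1 - w₁ * conj x) * y 0))
        + (1 - normSq z₁) * (1 - normSq x) *
            (normSq (y 3 + conj x * y 1) + normSq (y 4 + conj x * y 2)))
        / ((1 - normSq z₁) * (1 - normSq x)) : ℝ) : ℂ) := by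
    intro hs y
    have hE : (0:ℝ) < (1 - normSq z₁) * (1 - normSq x) := by
      apply mul_pos he2; linarith
    have hEne : (((1 - normSq z₁) * (1 - normSq x) : ℝ) : ℂ) ≠ 0 := by
      exact_mod_cast ne_of_gt hE
    rw [Complex.ofReal_div, eq_div_iff hEne]
    rw [← key z₁ w₁ x y he]
    push_cast
    ring
  -- PSD case analysis ingredient: normSq x ≤ 1 under PSD
  have hsle : (P8 z₁ w₁ x).PosSemidef → normSq x ≤ 1 := by
    intro h
    have := h.dotProduct_mulVec_nonneg ![0, 1, 0, -conj x, 0]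
    rw [eval3] at this
    have := (Complex.zero_le_real).mp this
    linarith
  -- normSq x = 1 is impossible under PSD
  have hsne : (P8 z₁ w₁ x).PosSemidef → normSq x ≠ 1 := by
    intro h hs1
    have hpne : (1:ℂ) - w₁ * conj x ≠ 0 := by
      intro hp
      have h1 : w₁ * conj x = 1 := by linear_combination -hp
      have h2 : normSq w₁ * normSq x = 1 := by
        rw [← normSq_conj x, ← normSq_mul, h1]; simp
      rw [hs1] at h2; simp at h2; linarith
    have hppos : 0 < normSq (1 - w₁ * conj x) := normSq_pos.mpr hpne
    set l : ℝ := (1 - normSq w₁) / ((1 - normSq z₁) * normSq (1 - w₁ * conj x)) with hldef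
    have := h.dotProduct_mulVec_nonneg ![1, -(l:ℂ) * conj (1 - w₁ * conj x), 0,
      (l:ℂ) * conj x * conj (1 - w₁ * conj x), 0]
    have hk := eval2 z₁ w₁ x l he
    -- take real parts
    have hre := congrArg Complex.re hk
    rw [Complex.re_ofReal_mul, Complex.ofReal_re] at hre
    have hQre : 0 ≤ (star ![1, -(l:ℂ) * conj (1 - w₁ * conj x), 0,
        (l:ℂ) * conj x * conj (1 - w₁ * conj x), 0] ⬝ᵥ (P8 z₁ w₁ x).mulVec
        ![1, -(l:ℂ) * conj (1 - w₁ * conj x), 0,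
        (l:ℂ) * conj x * conj (1 - w₁ * conj x), 0]).re := by
      have h0 := (Complex.le_def.mp this).1
      simpa using h0
    rw [hs1] at hre
    have hlval : (1 - normSq z₁) * (2 * l - (1 - 1) * l ^ 2) * normSq (1 - w₁ * conj x)
        = 2 * (1 - normSq w₁) := by
      rw [hldef]; field_simp; ring
    rw [hlval] at hre
    nlinarith [mul_nonneg he2.le hQre]
  -- the main test vector, when normSq x < 1
  have hmain : ∀ h : normSq x < 1,
      ((1 - normSq z₁) * (1 - normSq x)) *
        (star (![((1 - normSq x : ℝ) : ℂ), -conj (1 - w₁ * conj x),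
            -conj z₁ * conj (1 - w₁ * conj x), conj x * conj (1 - w₁ * conj x),
            conj x * conj z₁ * conj (1 - w₁ * conj x)] : Fin 5 → ℂ)
          ⬝ᵥ (P8 z₁ w₁ x).mulVec
          ![((1 - normSq x : ℝ) : ℂ), -conj (1 - w₁ * conj x),
            -conj z₁ * conj (1 - w₁ * conj x), conj x * conj (1 - w₁ * conj x),
            conj x * conj z₁ * conj (1 - w₁ * conj x)]).re
      = G * ((1 - normSq x) * (1 - normSq x)) := by
    intro hs
    set v : Fin 5 → ℂ := ![((1 - normSq x : ℝ) : ℂ), -conj (1 - w₁ * conj x),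
      -conj z₁ * conj (1 - w₁ * conj x), conj x * conj (1 - w₁ * conj x),
      conj x * conj z₁ * conj (1 - w₁ * conj x)] with hvdef
    have hk := key z₁ w₁ x v he
    have e1 : (1 - (normSq x : ℂ)) * v 1 + conj (1 - w₁ * conj x) * v 0 = 0 := by
      simp only [hvdef]
      simp [Matrix.cons_val_one, Matrix.head_cons]
      push_cast
      ring
    have e2 : (1 - (normSq x : ℂ)) * v 2 + conj z₁ * conj (1 - w₁ * conj x) * v 0 = 0 := by
      simp only [hvdef]
      simp
      push_cast
      ring
    have e3 : v 3 + conj x * v 1 = 0 := by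
      simp only [hvdef]; simp; ring
    have e4 : v 4 + conj x * v 2 = 0 := by
      simp only [hvdef]; simp; ring
    rw [e1, e2, e3, e4] at hk
    simp only [normSq_zero, add_zero, mul_zero, zero_add] at hk
    have hv0 : normSq (v 0) = (1 - normSq x) * (1 - normSq x) := by
      simp only [hvdef]
      simp
      rw [show (1 : ℂ) - ((normSq x : ℝ) : ℂ) = ((1 - normSq x : ℝ) : ℂ) by push_cast; ring,
        normSq_ofReal]
    rw [hv0] at hk
    have hre := congrArg Complex.re hk
    rw [Complex.ofReal_re] at hre
    rw [← hre]
    rw [show ((1 - normSq z₁ : ℝ):ℂ) * ((1 - normSq x : ℝ):ℂ)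
        = (((1 - normSq z₁) * (1 - normSq x) : ℝ) : ℂ) by push_cast; ring]
    rw [Complex.re_ofReal_mul]
  -- 0 ≤ G implies normSq x < 1
  have hGs : 0 ≤ G → normSq x < 1 := by
    intro hG
    by_contra hcon
    push_neg at hcon
    have hnz2 : (0:ℝ) < 1 - normSq z₁ ^ 2 := by nlinarith
    have hple : normSq (1 - w₁ * conj x) = 0 := by
      rw [hGdef] at hG; nlinarith
    have hp : (1:ℂ) - w₁ * conj x = 0 := normSq_eq_zero.mp hple
    have h1' : w₁ * conj x = 1 := by linear_combination -hp
    have h2 : normSq w₁ * normSq x = 1 := by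
      rw [← normSq_conj x, ← normSq_mul, h1']; simp
    rw [hGdef, hple, mul_zero, sub_zero] at hG
    nlinarith
  set v : Fin 5 → ℂ := ![((1 - normSq x : ℝ) : ℂ), -conj (1 - w₁ * conj x),
      -conj z₁ * conj (1 - w₁ * conj x), conj x * conj (1 - w₁ * conj x),
      conj x * conj z₁ * conj (1 - w₁ * conj x)] with hvdef
  constructor
  · constructor
    · intro h
      have hs : normSq x < 1 := lt_of_le_of_ne (hsle h) (hsne h)
      have hm := hmain hs
      have hQre : 0 ≤ (star v ⬝ᵥ (P8 z₁ w₁ x).mulVec v).re := by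
        have h0 := (Complex.le_def.mp (h.dotProduct_mulVec_nonneg v)).1
        simpa using h0
      have hE : (0:ℝ) < (1 - normSq z₁) * (1 - normSq x) := mul_pos he2 (by linarith)
      nlinarith [mul_nonneg hE.le hQre,
        mul_pos (show (0:ℝ) < 1 - normSq x by linarith) (show (0:ℝ) < 1 - normSq x by linarith)]
    · intro hG
      have hs := hGs hG
      refine Matrix.PosSemidef.of_dotProduct_mulVec_nonneg (P8_herm _ _ _) fun y => ?_
      rw [hform hs y, Complex.zero_le_real]
      apply div_nonneg _ (mul_pos he2 (by linarith : (0:ℝ) < 1 - normSq x)).le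
      have t1n : 0 ≤ G * normSq (y 0) := mul_nonneg hG (normSq_nonneg _)
      have t2n : 0 ≤ (1 - normSq z₁) *
          (normSq ((1 - (normSq x : ℂ)) * y 1 + conj (1 - w₁ * conj x) * y 0)
            + normSq ((1 - (normSq x : ℂ)) * y 2 + conj z₁ * conj (1 - w₁ * conj x) * y 0)) :=
        mul_nonneg he2.le (add_nonneg (normSq_nonneg _) (normSq_nonneg _))
      have t3n : 0 ≤ (1 - normSq z₁) * (1 - normSq x) *
          (normSq (y 3 + conj x * y 1) + normSq (y 4 + conj x * y 2)) :=
        mul_nonneg (mul_nonneg he2.le (by linarith)) (add_nonneg (normSq_nonneg _) (normSq_nonneg _))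
      linarith
  · constructor
    · intro h
      have hpsd := h.posSemidef
      have hs : normSq x < 1 := lt_of_le_of_ne (hsle hpsd) (hsne hpsd)
      have hm := hmain hs
      have hvne : v ≠ 0 := by
        intro h0
        have := congrFun h0 0
        rw [hvdef] at this
        simp at this
        have : (1 - normSq x : ℝ) = 0 := by exact_mod_cast this
        linarith
      have hQre : 0 < (star v ⬝ᵥ (P8 z₁ w₁ x).mulVec v).re := by
        have h0 := (Complex.lt_def.mp (h.dotProduct_mulVec_pos hvne)).1
        simpa using h0
      have hE : (0:ℝ) < (1 - normSq z₁) * (1 - normSq x) := mul_pos he2 (by linarith)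
      nlinarith [mul_pos hE hQre,
        mul_pos (show (0:ℝ) < 1 - normSq x by linarith) (show (0:ℝ) < 1 - normSq x by linarith)]
    · intro hG
      have hs := hGs hG.le
      have hsx : (1 : ℂ) - (normSq x : ℂ) ≠ 0 := by
        intro hcon
        have h' : ((1 - normSq x : ℝ) : ℂ) = 0 := by push_cast; linear_combination hcon
        have : (1 - normSq x : ℝ) = 0 := by exact_mod_cast h'
        linarith
      refine Matrix.PosDef.of_dotProduct_mulVec_pos (P8_herm _ _ _) fun y hy => ?_
      rw [hform hs y, Complex.zero_lt_real]
      apply div_pos _ (mul_pos he2 (by linarith : (0:ℝ) < 1 - normSq x))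
      have t1n : 0 ≤ G * normSq (y 0) := mul_nonneg hG.le (normSq_nonneg _)
      have t2n : 0 ≤ (1 - normSq z₁) *
          (normSq ((1 - (normSq x : ℂ)) * y 1 + conj (1 - w₁ * conj x) * y 0)
            + normSq ((1 - (normSq x : ℂ)) * y 2 + conj z₁ * conj (1 - w₁ * conj x) * y 0)) :=
        mul_nonneg he2.le (add_nonneg (normSq_nonneg _) (normSq_nonneg _))
      have t3n : 0 ≤ (1 - normSq z₁) * (1 - normSq x) *
          (normSq (y 3 + conj x * y 1) + normSq (y 4 + conj x * y 2)) :=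
        mul_nonneg (mul_nonneg he2.le (by linarith)) (add_nonneg (normSq_nonneg _) (normSq_nonneg _))
      by_cases h0 : y 0 = 0
      · by_cases h1 : y 1 = 0
        · by_cases h2 : y 2 = 0
          · have h34 : y 3 ≠ 0 ∨ y 4 ≠ 0 := by
              by_contra hcon
              push_neg at hcon
              apply hy
              funext i
              fin_cases i <;> simp [h0, h1, h2, hcon.1, hcon.2]
            have e3 : y 3 + conj x * y 1 = y 3 := by rw [h1]; ring
            have e4 : y 4 + conj x * y 2 = y 4 := by rw [h2]; ring
            rw [e3, e4]
            have hpos : 0 < normSq (y 3) + normSq (y 4) := by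
              rcases h34 with h34 | h34
              · exact add_pos_of_pos_of_nonneg (normSq_pos.mpr h34) (normSq_nonneg _)
              · exact add_pos_of_nonneg_of_pos (normSq_nonneg _) (normSq_pos.mpr h34)
            have hfin := mul_pos (mul_pos he2 (by linarith : (0:ℝ) < 1 - normSq x)) hpos
            linarith
          · have eA : (1 - (normSq x : ℂ)) * y 2 + conj z₁ * conj (1 - w₁ * conj x) * y 0
                = (1 - (normSq x : ℂ)) * y 2 := by rw [h0]; ring
            rw [eA]
            have hpos : 0 < normSq ((1 - (normSq x : ℂ)) * y 2) :=
              normSq_pos.mpr (mul_ne_zero hsx h2)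
            have hfin := mul_pos he2 (add_pos_of_nonneg_of_pos
              (normSq_nonneg ((1 - (normSq x : ℂ)) * y 1 + conj (1 - w₁ * conj x) * y 0)) hpos)
            linarith
        · have eA : (1 - (normSq x : ℂ)) * y 1 + conj (1 - w₁ * conj x) * y 0
              = (1 - (normSq x : ℂ)) * y 1 := by rw [h0]; ring
          rw [eA]
          have hpos : 0 < normSq ((1 - (normSq x : ℂ)) * y 1) :=
            normSq_pos.mpr (mul_ne_zero hsx h1)
          have hfin := mul_pos he2 (add_pos_of_pos_of_nonneg hpos
            (normSq_nonneg ((1 - (normSq x : ℂ)) * y 2 + conj z₁ * conj (1 - w₁ * conj x) * y 0)))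
          linarith
      · have hfin := mul_pos hG (normSq_pos.mpr h0)
        linarith


/-- Corollary 4.3.  For the one-point constrained Nevanlinna-Pick
problem a solution always exists, and the set of parameters `x` for which `ℙ_x` is
positive semidefinite (resp. positive definite) is the closed (resp. open) disk with
center `c` and radius `r`. -/
theorem stmt8 (z₁ w₁ : ℂ) (hz : z₁ ∈ unitDisk) (hz0 : z₁ ≠ 0) (hw : ‖w₁‖ < 1)
    (c : ℂ) (r : ℝ)
    (hc : c = w₁ * ((1 - ‖z₁‖ ^ 4 : ℝ) : ℂ) /
      ((1 - ‖z₁‖ ^ 4 * ‖w₁‖ ^ 2 : ℝ) : ℂ))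
    (hr : r = ‖z₁‖ ^ 2 * (1 - ‖w₁‖ ^ 2) /
      (1 - ‖z₁‖ ^ 4 * ‖w₁‖ ^ 2)) :
    (∃ s : ℂ → ℂ, MemS1 s ∧ s z₁ = w₁) ∧
    {x : ℂ | (P8 z₁ w₁ x).PosSemidef} = {x : ℂ | ‖x - c‖ ≤ r} ∧
    ∀ x : ℂ, (P8 z₁ w₁ x).PosDef ↔ ‖x - c‖ < r := by
  have hz' : ‖z₁‖ < 1 := hz
  refine ⟨part1 z₁ w₁ hz' hw, ?_, ?_⟩
  · ext x
    simp only [Set.mem_setOf_eq]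
    rw [(GposIff z₁ w₁ hz' hw x).1, (diskiff z₁ w₁ hz' hw c r hc hr x).1]
  · intro x
    rw [(GposIff z₁ w₁ hz' hw x).2, (diskiff z₁ w₁ hz' hw c r hc hr x).2]

end CNP
end
end

section
/- Let 1 ≤ ℓ ≤ ℓ' ≤ k and (α,β) ∈ 𝔾(ℓ'×ℓ). Then for every w ∈ 𝔻 and X ∈ ℂ^{k×ℓ} the function z ↦ X·K^{α,β}(z,w) belongs to H²_{α,β}, and for every f ∈ H²_{α,β} one has ⟨f, X·K^{α,β}(·,w)⟩ = trace(X*·f(w)). Moreover, for every F ∈ (H∞_1)^{k×k} and every f ∈ H²_{α,β}: ⟨F·f, X·K^{α,β}(·,w)⟩ = ⟨f, (F(w)*·X)·K^{α,β}(·,w)⟩ (so the Hilbert-space adjoint of multiplication by F on H²_{α,β} maps X·K^{α,β}(·,w) to F(w)*·X·K^{α,β}(·,w)). -/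
open scoped ComplexConjugate ComplexOrder
open Matrix

noncomputable section

namespace CNP

/-! ### Auxiliary lemmas for `stmt11` -/

lemma unitDisk_eq : unitDisk = Metric.ball (0:ℂ) 1 := by
  ext z; simp [unitDisk, Metric.mem_ball, Complex.dist_eq]

lemma isOpen_unitDisk : IsOpen unitDisk := by
  rw [unitDisk_eq]; exact Metric.isOpen_ball

lemma zero_mem_unitDisk : (0 : ℂ) ∈ unitDisk := by simp [unitDisk]

lemma iteratedDeriv_congr_open {f g : ℂ → ℂ} {S : Set ℂ} (hS : IsOpen S)
    (h : ∀ z ∈ S, f z = g z) : ∀ m, ∀ z ∈ S, iteratedDeriv m f z = iteratedDeriv m g z := by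
  intro m
  induction m with
  | zero => simpa using h
  | succ n ih =>
    intro z hz
    rw [iteratedDeriv_succ, iteratedDeriv_succ]
    apply Filter.EventuallyEq.deriv_eq
    filter_upwards [hS.mem_nhds hz] with t ht using ih t ht

lemma isOpen_ne_one (v : ℂ) : IsOpen {z : ℂ | v * z ≠ 1} := by
  have : {z : ℂ | v * z ≠ 1} = (fun z => v * z) ⁻¹' {(1:ℂ)}ᶜ := rfl
  rw [this]
  exact (isOpen_compl_singleton).preimage (by fun_prop)

lemma hasDerivAt_res (v : ℂ) (z : ℂ) (hz : v * z ≠ 1) (n : ℕ) :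
    HasDerivAt (fun t => ((1 - v * t)⁻¹) ^ (n+1))
      ((n+1) * ((1 - v*z)⁻¹)^n * (v * ((1 - v*z)⁻¹)^2)) z := by
  have h0 : (1 : ℂ) - v * z ≠ 0 := by intro h; apply hz; linear_combination -h
  have h1 : HasDerivAt (fun t => 1 - v * t) (-v) z := by
    simpa using ((hasDerivAt_id z).const_mul v).const_sub 1
  have h2 : HasDerivAt (fun t => (1 - v * t)⁻¹) (v * ((1 - v*z)⁻¹)^2) z := by
    have := h1.inv h0
    refine this.congr_deriv ?_
    rw [neg_neg, div_eq_mul_inv, inv_pow]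
  have h3 := h2.pow (n+1)
  refine h3.congr_deriv ?_
  rw [Nat.add_sub_cancel]; push_cast; ring

lemma iteratedDeriv_res (v A B C : ℂ) :
    ∀ m : ℕ, 1 ≤ m → ∀ z : ℂ, v * z ≠ 1 →
      iteratedDeriv m (fun t => A + B * t + C * (1 - v * t)⁻¹) z
        = (if m = 1 then B else 0)
          + C * (m.factorial : ℂ) * v ^ m * ((1 - v * z)⁻¹) ^ (m + 1) := by
  intro m hm
  induction m, hm using Nat.le_induction with
  | base =>
    intro z hz
    rw [iteratedDeriv_one]
    have h0 : (1 : ℂ) - v * z ≠ 0 := by intro h; apply hz; linear_combination -h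
    have h1 : HasDerivAt (fun t => (1 - v * t)⁻¹) (v * ((1 - v*z)⁻¹)^2) z := by
      have hlin : HasDerivAt (fun t => 1 - v * t) (-v) z := by
        simpa using ((hasDerivAt_id z).const_mul v).const_sub 1
      have := hlin.inv h0
      refine this.congr_deriv ?_
      rw [neg_neg, div_eq_mul_inv, inv_pow]
    have h2 : HasDerivAt (fun t => A + B * t + C * (1 - v * t)⁻¹)
        (B + C * (v * ((1 - v*z)⁻¹)^2)) z := by
      have hb : HasDerivAt (fun t : ℂ => A + B * t) B z := by
        simpa using ((hasDerivAt_id z).const_mul B).const_add A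
      exact hb.add (h1.const_mul C)
    rw [h2.deriv]
    simp [Nat.factorial]
    ring
  | succ n hn ih =>
    intro z hz
    rw [iteratedDeriv_succ]
    have hev : iteratedDeriv n (fun t => A + B * t + C * (1 - v * t)⁻¹)
        =ᶠ[nhds z] fun t => (if n = 1 then B else 0)
          + C * (n.factorial : ℂ) * v ^ n * ((1 - v * t)⁻¹) ^ (n + 1) := by
      filter_upwards [(isOpen_ne_one v).mem_nhds hz] with t ht using ih t ht
    rw [hev.deriv_eq]
    have hd : HasDerivAt (fun t => (if n = 1 then B else 0)
          + C * (n.factorial : ℂ) * v ^ n * ((1 - v * t)⁻¹) ^ (n + 1))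
        (C * (n.factorial : ℂ) * v ^ n *
          ((n+1) * ((1 - v*z)⁻¹)^n * (v * ((1 - v*z)⁻¹)^2))) z :=
      ((hasDerivAt_res v z hz n).const_mul _).const_add _
    rw [hd.deriv]
    have hn1 : n + 1 ≠ 1 := by omega
    rw [if_neg hn1, Nat.factorial_succ]
    push_cast
    ring

section Kernel

variable {k l l' : ℕ} (α β : Matrix (Fin l') (Fin l) ℂ) (X : Matrix (Fin k) (Fin l) ℂ) (w : ℂ)

lemma kernel_entry (z : ℂ) (i : Fin k) (j : Fin l) :
    (X * KabM α β z w) i j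
      = (X * (αᴴ + conj w • βᴴ) * α) i j + (X * (αᴴ + conj w • βᴴ) * β) i j * z
        + X i j * (conj w ^ 2 * z ^ 2 / (1 - conj w * z)) := by
  have : X * KabM α β z w
      = X * (αᴴ + conj w • βᴴ) * α + z • (X * (αᴴ + conj w • βᴴ) * β)
        + (conj w ^ 2 * z ^ 2 / (1 - conj w * z)) • X := by
    simp only [KabM, Matrix.mul_add, Matrix.mul_smul, Matrix.mul_one, Matrix.add_mul,
      Matrix.smul_mul, smul_add, Matrix.mul_assoc]
  rw [this]
  simp only [Matrix.add_apply, Matrix.smul_apply, smul_eq_mul]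
  ring

lemma kernel_entry_res (z : ℂ) (hz : conj w * z ≠ 1) (i : Fin k) (j : Fin l) :
    (X * KabM α β z w) i j
      = ((X * (αᴴ + conj w • βᴴ) * α) i j - X i j)
        + ((X * (αᴴ + conj w • βᴴ) * β) i j - conj w * X i j) * z
        + X i j * (1 - conj w * z)⁻¹ := by
  rw [kernel_entry]
  have h0 : (1 : ℂ) - conj w * z ≠ 0 := by intro h; apply hz; linear_combination -h
  have h0' : (1 : ℂ) - z * conj w ≠ 0 := by rwa [mul_comm z]
  field_simp
  ring

lemma taylorCoeff_kernel (m : ℕ) :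
    taylorCoeff (fun z => X * KabM α β z w) m
      = if m = 0 then X * (αᴴ + conj w • βᴴ) * α
        else if m = 1 then X * (αᴴ + conj w • βᴴ) * β
        else (conj w) ^ m • X := by
  set v := conj w with hv
  set P := X * (αᴴ + conj w • βᴴ) * α with hP
  set Q := X * (αᴴ + conj w • βᴴ) * β with hQ
  ext i j
  have h0S : (0 : ℂ) ∈ {z : ℂ | v * z ≠ 1} := by simp
  have hcongr := iteratedDeriv_congr_open (f := fun z => (X * KabM α β z w) i j)
    (g := fun z => (P i j - X i j) + (Q i j - v * X i j) * z + (X i j) * (1 - v * z)⁻¹)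
    (isOpen_ne_one v) (fun z hz => kernel_entry_res α β X w z hz i j)
  rcases Nat.lt_or_ge m 2 with hm | hm
  · interval_cases m
    · simp only [taylorCoeff, Matrix.of_apply, iteratedDeriv_zero, if_pos rfl]
      rw [kernel_entry]
      simp
      rfl
    · simp only [taylorCoeff, Matrix.of_apply]
      rw [hcongr 1 0 h0S, iteratedDeriv_res v _ _ _ 1 le_rfl 0 h0S]
      norm_num
      ring
  · have hm0 : m ≠ 0 := by omega
    have hm1 : m ≠ 1 := by omega
    simp only [taylorCoeff, Matrix.of_apply, if_neg hm0, if_neg hm1]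
    rw [hcongr m 0 h0S, iteratedDeriv_res v _ _ _ m (by omega) 0 h0S, if_neg hm1]
    have : (m.factorial : ℂ) ≠ 0 := by exact_mod_cast Nat.factorial_ne_zero m
    simp only [Matrix.smul_apply, smul_eq_mul]
    field_simp
    ring

end Kernel
section Analytic

variable {k l l' : ℕ}

lemma taylorCoeff_zero (g : ℂ → Matrix (Fin k) (Fin l) ℂ) : taylorCoeff g 0 = g 0 := by
  ext i j; simp [taylorCoeff]

lemma taylorCoeff_one (g : ℂ → Matrix (Fin k) (Fin l) ℂ) : taylorCoeff g 1 = matDeriv g 0 := by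
  ext i j; simp [taylorCoeff, matDeriv, iteratedDeriv_one]

lemma hasSum_taylor_entry {g : ℂ → Matrix (Fin k) (Fin l) ℂ} (hg : matHol g)
    {w : ℂ} (hw : w ∈ unitDisk) (i : Fin k) (j : Fin l) :
    HasSum (fun m => w ^ m * taylorCoeff g m i j) (g w i j) := by
  have h := Complex.hasSum_taylorSeries_on_ball (f := fun z => g z i j) (c := 0) (r := 1)
    (by rw [← unitDisk_eq]; exact hg i j) (by rw [← unitDisk_eq]; exact hw)
  convert h using 2 with m
  · rfl
  simp only [taylorCoeff, Matrix.of_apply, smul_eq_mul, sub_zero]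
  field_simp

lemma trace_conjT_mul (X M : Matrix (Fin k) (Fin l) ℂ) :
    Matrix.trace (Xᴴ * M) = ∑ j, ∑ i, conj (X i j) * M i j := by
  simp [Matrix.trace, Matrix.mul_apply, Matrix.conjTranspose_apply, Matrix.diag]

lemma hasSum_trace {g : ℂ → Matrix (Fin k) (Fin l) ℂ} (hg : matHol g)
    {w : ℂ} (hw : w ∈ unitDisk) (X : Matrix (Fin k) (Fin l) ℂ) :
    HasSum (fun m => w ^ m * Matrix.trace (Xᴴ * taylorCoeff g m))
      (Matrix.trace (Xᴴ * g w)) := by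
  have h : HasSum (fun m => ∑ j, ∑ i, conj (X i j) * (w ^ m * taylorCoeff g m i j))
      (∑ j, ∑ i, conj (X i j) * g w i j) := by
    refine hasSum_sum fun j _ => hasSum_sum fun i _ => ?_
    exact (hasSum_taylor_entry hg hw i j).mul_left _
  rw [trace_conjT_mul]
  convert h using 2 with m
  rw [trace_conjT_mul, Finset.mul_sum]
  refine Finset.sum_congr rfl fun j _ => ?_
  rw [Finset.mul_sum]
  exact Finset.sum_congr rfl fun i _ => by ring

lemma master {α β : Matrix (Fin l') (Fin l) ℂ} (hG : MemG α β)
    {w : ℂ} (hw : w ∈ unitDisk) (X : Matrix (Fin k) (Fin l) ℂ)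
    {g : ℂ → Matrix (Fin k) (Fin l) ℂ} (hg : matHol g)
    (U : Matrix (Fin k) (Fin l') ℂ) (h0 : g 0 = U * α) (h1 : matDeriv g 0 = U * β) :
    HasSum (fun m => Matrix.trace
        ((taylorCoeff (fun z => X * KabM α β z w) m)ᴴ * taylorCoeff g m))
      (Matrix.trace (Xᴴ * g w)) := by
  set s : ℕ → ℂ := fun m => w ^ m * Matrix.trace (Xᴴ * taylorCoeff g m) with hs_def
  set t : ℕ → ℂ := fun m => Matrix.trace
      ((taylorCoeff (fun z => X * KabM α β z w) m)ᴴ * taylorCoeff g m) with ht_def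
  have hs : HasSum s (Matrix.trace (Xᴴ * g w)) := hasSum_trace hg hw X
  have ht2 : ∀ n : ℕ, t (n + 2) = s (n + 2) := by
    intro n
    simp only [ht_def, hs_def, taylorCoeff_kernel]
    rw [if_neg (by omega), if_neg (by omega)]
    rw [Matrix.conjTranspose_smul, Matrix.smul_mul, Matrix.trace_smul]
    simp [smul_eq_mul]
  have hkey : t 0 + t 1 = s 0 + s 1 := by
    have hk0 : taylorCoeff (fun z => X * KabM α β z w) 0 = X * (αᴴ + conj w • βᴴ) * α := by
      rw [taylorCoeff_kernel]; norm_num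
    have hk1 : taylorCoeff (fun z => X * KabM α β z w) 1 = X * (αᴴ + conj w • βᴴ) * β := by
      rw [taylorCoeff_kernel]; norm_num
    have e0 : t 0 = Matrix.trace (U * (α * αᴴ) * ((α + w • β) * Xᴴ)) := by
      simp only [ht_def, hk0, taylorCoeff_zero, h0]
      rw [Matrix.trace_mul_comm]
      simp [Matrix.mul_assoc, Matrix.conjTranspose_mul, Matrix.conjTranspose_add,
        Matrix.conjTranspose_smul]
    have e1 : t 1 = Matrix.trace (U * (β * βᴴ) * ((α + w • β) * Xᴴ)) := by
      simp only [ht_def, hk1, taylorCoeff_one, h1]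
      rw [Matrix.trace_mul_comm]
      simp [Matrix.mul_assoc, Matrix.conjTranspose_mul, Matrix.conjTranspose_add,
        Matrix.conjTranspose_smul]
    have esum : t 0 + t 1 = Matrix.trace (U * ((α + w • β) * Xᴴ)) := by
      rw [e0, e1, ← Matrix.trace_add, ← Matrix.add_mul, ← Matrix.mul_add, hG.1, Matrix.mul_one]
    rw [esum]
    have hexp : U * ((α + w • β) * Xᴴ) = U * α * Xᴴ + w • (U * β * Xᴴ) := by
      rw [Matrix.add_mul, Matrix.mul_add, Matrix.smul_mul, Matrix.mul_smul]
      rw [Matrix.mul_assoc, Matrix.mul_assoc]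
    rw [hexp, Matrix.trace_add, Matrix.trace_smul]
    simp only [hs_def, taylorCoeff_zero, taylorCoeff_one, h0, h1, pow_zero, pow_one, one_mul]
    rw [Matrix.trace_mul_comm (U * α) Xᴴ, Matrix.trace_mul_comm (U * β) Xᴴ]
    simp [smul_eq_mul]
  -- assemble
  have hrange : ∀ u : ℕ → ℂ, ∑ i ∈ Finset.range 2, u i = u 0 + u 1 := by
    intro u; simp [Finset.sum_range_succ]
  have hs2 : HasSum (fun n => s (n + 2)) (Matrix.trace (Xᴴ * g w) - (s 0 + s 1)) := by
    rw [hasSum_nat_add_iff 2, hrange]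
    convert hs using 1
    · rfl
    ring
  have ht2' : HasSum (fun n => t (n + 2)) (Matrix.trace (Xᴴ * g w) - (s 0 + s 1)) := by
    have he : (fun n => t (n + 2)) = fun n => s (n + 2) := funext ht2
    rw [he]; exact hs2
  have hfin := (hasSum_nat_add_iff (f := t) 2).mp ht2'
  rw [hrange t, hkey] at hfin
  convert hfin using 1
  · rfl
  ring

end Analytic
section Membership

variable {k l l' : ℕ} (α β : Matrix (Fin l') (Fin l) ℂ)

lemma one_sub_ne {w z : ℂ} (hw : w ∈ unitDisk) (hz : z ∈ unitDisk) :
    (1 : ℂ) - conj w * z ≠ 0 := by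
  simp only [unitDisk, Set.mem_setOf_eq] at hw hz
  intro h
  have h1 : conj w * z = 1 := by linear_combination -h
  have h2 : ‖conj w * z‖ = 1 := by rw [h1, norm_one]
  rw [norm_mul, Complex.norm_conj] at h2
  nlinarith [norm_nonneg w, norm_nonneg z]

lemma kernel_matHol {w : ℂ} (hw : w ∈ unitDisk) (X : Matrix (Fin k) (Fin l) ℂ) :
    matHol (fun z => X * KabM α β z w) := by
  intro i j
  have he : (fun z => (X * KabM α β z w) i j)
      = fun z => (X * (αᴴ + conj w • βᴴ) * α) i j + (X * (αᴴ + conj w • βᴴ) * β) i j * z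
        + X i j * (conj w ^ 2 * z ^ 2 / (1 - conj w * z)) :=
    funext fun z => kernel_entry α β X w z i j
  rw [he]
  have hd1 : DifferentiableOn ℂ
      (fun z : ℂ => (X * (αᴴ + conj w • βᴴ) * α) i j
        + (X * (αᴴ + conj w • βᴴ) * β) i j * z) unitDisk :=
    (differentiableOn_const _).add (differentiableOn_id.const_mul _)
  refine hd1.add (DifferentiableOn.const_mul ?_ _)
  refine DifferentiableOn.div ?_ ?_ (fun z hz => one_sub_ne hw hz)
  · exact (differentiableOn_id.pow 2).const_mul _
  · exact (differentiableOn_const _).sub (differentiableOn_id.const_mul _)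

lemma kernel_summable {w : ℂ} (hw : w ∈ unitDisk) (X : Matrix (Fin k) (Fin l) ℂ) :
    Summable fun m => frobSq (taylorCoeff (fun z => X * KabM α β z w) m) := by
  rw [← summable_nat_add_iff 2]
  have hcalc : ∀ n : ℕ, frobSq (taylorCoeff (fun z => X * KabM α β z w) (n + 2))
      = Complex.normSq w ^ (n + 2) * frobSq X := by
    intro n
    rw [taylorCoeff_kernel, if_neg (by omega), if_neg (by omega)]
    simp only [frobSq, Matrix.smul_apply, smul_eq_mul, Complex.normSq_mul, Finset.mul_sum]
    refine Finset.sum_congr rfl fun i _ => Finset.sum_congr rfl fun j _ => ?_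
    rw [← Complex.normSq_conj w]
    rw [map_pow Complex.normSq]
  have hlt : Complex.normSq w < 1 := by
    simp only [unitDisk, Set.mem_setOf_eq] at hw
    rw [Complex.normSq_eq_norm_sq]
    nlinarith [norm_nonneg w]
  have hgeo := (summable_geometric_of_lt_one (Complex.normSq_nonneg w) hlt).mul_right (frobSq X)
  refine Summable.congr ((hgeo.mul_left (Complex.normSq w ^ 2)).congr fun n => ?_)
    fun n => (hcalc n).symm
  rw [pow_add]
  ring

lemma kernel_mem {w : ℂ} (hw : w ∈ unitDisk) (X : Matrix (Fin k) (Fin l) ℂ) :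
    MemH2ab α β (fun z => X * KabM α β z w) := by
  refine ⟨⟨kernel_matHol α β hw X, kernel_summable α β hw X⟩,
    X * (αᴴ + conj w • βᴴ), ?_, ?_⟩
  · show X * KabM α β 0 w = X * (αᴴ + conj w • βᴴ) * α
    rw [← taylorCoeff_zero (fun z => X * KabM α β z w), taylorCoeff_kernel]
    norm_num
  · rw [← taylorCoeff_one (fun z => X * KabM α β z w), taylorCoeff_kernel]
    norm_num

lemma matHol_mul {F : ℂ → Matrix (Fin k) (Fin k) ℂ} {f : ℂ → Matrix (Fin k) (Fin l) ℂ}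
    (hF : matHol F) (hf : matHol f) : matHol (fun z => F z * f z) := by
  intro i j
  have he : (fun z => (F z * f z) i j) = fun z => ∑ x, F z i x * f z x j :=
    funext fun z => Matrix.mul_apply
  rw [he]
  exact DifferentiableOn.fun_sum fun x _ => (hF i x).mul (hf x j)

lemma matDeriv_mul {F : ℂ → Matrix (Fin k) (Fin k) ℂ} {f : ℂ → Matrix (Fin k) (Fin l) ℂ}
    (hF : matHol F) (hf : matHol f) (hF0 : matDeriv F 0 = 0) :
    matDeriv (fun z => F z * f z) 0 = F 0 * matDeriv f 0 := by
  have hmem := isOpen_unitDisk.mem_nhds zero_mem_unitDisk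
  ext i j
  have hFd : ∀ a b, HasDerivAt (fun z => F z a b) (matDeriv F 0 a b) 0 := fun a b => by
    simpa [matDeriv] using ((hF a b).differentiableAt hmem).hasDerivAt
  have hfd : ∀ a b, HasDerivAt (fun z => f z a b) (matDeriv f 0 a b) 0 := fun a b => by
    simpa [matDeriv] using ((hf a b).differentiableAt hmem).hasDerivAt
  have hsum : HasDerivAt (fun z => (F z * f z) i j)
      (∑ x, (matDeriv F 0 i x * f 0 x j + F 0 i x * matDeriv f 0 x j)) 0 := by
    have he : (fun z => (F z * f z) i j) = fun z => ∑ x, F z i x * f z x j :=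
      funext fun z => Matrix.mul_apply
    rw [he]
    exact HasDerivAt.fun_sum fun x _ => (hFd i x).mul (hfd x j)
  show deriv (fun z => (F z * f z) i j) 0 = (F 0 * matDeriv f 0) i j
  rw [hsum.deriv, hF0]
  simp [Matrix.mul_apply]

end Membership
/-- Proposition 2.4.  `H²_{α,β}` is a reproducing kernel Hilbert
space with kernel `K^{α,β}`, and the adjoint of multiplication by
`F ∈ (H^∞_1)^{k×k}` acts on kernel elements by `X K^{α,β}(·,w) ↦ F(w)ᴴ X K^{α,β}(·,w)`. -/
theorem stmt11 (k l l' : ℕ) (hl : 1 ≤ l) (hll' : l ≤ l') (hl'k : l' ≤ k)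
    (α β : Matrix (Fin l') (Fin l) ℂ) (hG : MemG α β) :
    (∀ w ∈ unitDisk, ∀ X : Matrix (Fin k) (Fin l) ℂ,
      MemH2ab α β (fun z => X * KabM α β z w)) ∧
    (∀ w ∈ unitDisk, ∀ X : Matrix (Fin k) (Fin l) ℂ,
      ∀ f : ℂ → Matrix (Fin k) (Fin l) ℂ, MemH2ab α β f →
        h2inner f (fun z => X * KabM α β z w) = Matrix.trace (Xᴴ * f w)) ∧
    (∀ F : ℂ → Matrix (Fin k) (Fin k) ℂ, MemHinf1 F →
      ∀ w ∈ unitDisk, ∀ X : Matrix (Fin k) (Fin l) ℂ,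
        ∀ f : ℂ → Matrix (Fin k) (Fin l) ℂ, MemH2ab α β f →
          h2inner (fun z => F z * f z) (fun z => X * KabM α β z w) =
            h2inner f (fun z => ((F w)ᴴ * X) * KabM α β z w)) := by
  refine ⟨fun w hw X => kernel_mem α β hw X, ?_, ?_⟩
  · intro w hw X f hf
    obtain ⟨⟨hhol, _⟩, U, h0, h1⟩ := hf
    exact (master hG hw X hhol U h0 h1).tsum_eq
  · intro F hF w hw X f hf
    obtain ⟨⟨hFhol, _⟩, hF0⟩ := hF
    obtain ⟨⟨hfhol, _⟩, U, h0, h1⟩ := hf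
    have hgh : matHol (fun z => F z * f z) := matHol_mul hFhol hfhol
    have hg0 : (fun z => F z * f z) 0 = (F 0 * U) * α := by
      show F 0 * f 0 = _
      rw [h0, Matrix.mul_assoc]
    have hg1 : matDeriv (fun z => F z * f z) 0 = (F 0 * U) * β := by
      rw [matDeriv_mul hFhol hfhol hF0, h1, Matrix.mul_assoc]
    have hL : h2inner (fun z => F z * f z) (fun z => X * KabM α β z w)
        = Matrix.trace (Xᴴ * (F w * f w)) :=
      (master hG hw X hgh (F 0 * U) hg0 hg1).tsum_eq
    have hR : h2inner f (fun z => ((F w)ᴴ * X) * KabM α β z w)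
        = Matrix.trace (((F w)ᴴ * X)ᴴ * f w) :=
      (master hG hw ((F w)ᴴ * X) hfhol U h0 h1).tsum_eq
    rw [hL, hR, Matrix.conjTranspose_mul, Matrix.conjTranspose_conjTranspose,
      Matrix.mul_assoc]

end CNP
end
end

section
/- Let k ≥ 1 and let z₁,…,z_n be distinct nonzero points of 𝔻; set B_𝔇(z) = Π_{i=1}^n (z − z_i)/(1 − conj(z_i)·z). Then there exist matrices a, b ∈ ℂ^{k×k} with a invertible and a*·a + b*·b = I_k such that {F ∈ (H∞_1)^{k×k} : F(z_i) = 0 for i = 1,…,n} = {B_𝔇·G : G : 𝔻 → ℂ^{k×k} has holomorphic entries, sup_{z∈𝔻}‖G(z)‖ < ∞, and there exists U ∈ ℂ^{k×k} with G(0) = a·U and G'(0) = b·U}. -/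
open scoped ComplexConjugate ComplexOrder
open Matrix

noncomputable section

namespace CNP

lemma denom_ne_zero {w ζ : ℂ} (hw : ‖w‖ < 1) (hζ : ‖ζ‖ < 1) :
    1 - conj w * ζ ≠ 0 := by
  intro h
  have h1 : conj w * ζ = 1 := by linear_combination -h
  have : ‖conj w * ζ‖ < 1 := by
    rw [norm_mul, Complex.norm_conj]
    calc ‖w‖ * ‖ζ‖ ≤ ‖w‖ * 1 :=
      mul_le_mul_of_nonneg_left hζ.le (norm_nonneg _)
    _ = ‖w‖ := mul_one _
    _ < 1 := hw
  rw [h1] at this; simp at this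

lemma blaschke_abs_le {w ζ : ℂ} (hw : ‖w‖ < 1) (hζ : ‖ζ‖ < 1) :
    ‖(ζ - w) / (1 - conj w * ζ)‖ ≤ 1 := by
  have hden := denom_ne_zero hw hζ
  have hw2 : w.re * w.re + w.im * w.im < 1 := by
    have := Complex.sq_norm w
    nlinarith [Complex.normSq_apply w, norm_nonneg w]
  have hζ2 : ζ.re * ζ.re + ζ.im * ζ.im < 1 := by
    have := Complex.sq_norm ζ
    nlinarith [Complex.normSq_apply ζ, norm_nonneg ζ]
  have key : Complex.normSq (ζ - w) ≤ Complex.normSq (1 - conj w * ζ) := by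
    simp only [Complex.normSq_apply, Complex.sub_re, Complex.sub_im, Complex.mul_re,
      Complex.mul_im, Complex.one_re, Complex.one_im, Complex.conj_re, Complex.conj_im]
    nlinarith [mul_nonneg (by linarith : (0:ℝ) ≤ 1 - (ζ.re * ζ.re + ζ.im * ζ.im))
      (by linarith : (0:ℝ) ≤ 1 - (w.re * w.re + w.im * w.im))]
  rw [norm_div]
  apply div_le_one_of_le₀
  · rw [Complex.norm_def, Complex.norm_def]
    exact Real.sqrt_le_sqrt key
  · exact norm_nonneg _

lemma factor_out : ∀ (n : ℕ) (z : Fin n → ℂ) (f : ℂ → ℂ),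
    (∀ i, z i ∈ unitDisk) → Function.Injective z →
    DifferentiableOn ℂ f unitDisk → (∀ i, f (z i) = 0) →
    ∃ g : ℂ → ℂ, DifferentiableOn ℂ g unitDisk ∧ ∀ ζ, f ζ = (∏ i, (ζ - z i)) * g ζ := by
  intro n
  induction n with
  | zero =>
    intro z f _ _ hf _
    exact ⟨f, hf, fun ζ => by simp⟩
  | succ n ih =>
    intro z f hz hinj hf hf0
    have hder : DifferentiableOn ℂ (dslope f (z 0)) unitDisk :=
      (Complex.differentiableOn_dslope (isOpen_unitDisk.mem_nhds (hz 0))).mpr hf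
    have hzero : ∀ i : Fin n, dslope f (z 0) (z i.succ) = 0 := by
      intro i
      have hne : z i.succ ≠ z 0 := fun h => Fin.succ_ne_zero i (hinj h)
      rw [dslope_of_ne f hne, slope_def_field, hf0 i.succ, hf0 0, sub_zero, zero_div]
    obtain ⟨g, hg, hfg⟩ := ih (z ∘ Fin.succ) (dslope f (z 0)) (fun i => hz i.succ)
      (fun a b h => Fin.succ_injective n (hinj h)) hder hzero
    refine ⟨g, hg, fun ζ => ?_⟩
    have h1 : (ζ - z 0) * dslope f (z 0) ζ = f ζ := by
      have h2 := sub_smul_dslope f (z 0) ζ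
      rw [hf0 0, sub_zero, smul_eq_mul] at h2
      exact h2
    rw [Fin.prod_univ_succ, ← h1, hfg ζ]
    simp only [Function.comp]
    ring

lemma opNormM_smul {k : ℕ} (c : ℂ) (A : Matrix (Fin k) (Fin k) ℂ) :
    opNormM (c • A) = ‖c‖ * opNormM A := by
  unfold opNormM
  rw [_root_.map_smul, _root_.map_smul]
  have h := norm_smul c (LinearMap.toContinuousLinearMap (Matrix.toEuclideanLin A))
  exact h

lemma opNormM_nonneg {k : ℕ} (A : Matrix (Fin k) (Fin k) ℂ) : 0 ≤ opNormM A :=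
  norm_nonneg _

lemma continuous_opNormM {k : ℕ} :
    Continuous (fun A : Matrix (Fin k) (Fin k) ℂ => opNormM A) := by
  have hL : Continuous (fun A : Matrix (Fin k) (Fin k) ℂ =>
      LinearMap.toContinuousLinearMap (Matrix.toEuclideanLin A)) := by
    exact (((LinearMap.toContinuousLinearMap :
      (EuclideanSpace ℂ (Fin k) →ₗ[ℂ] EuclideanSpace ℂ (Fin k)) ≃ₗ[ℂ]
        (EuclideanSpace ℂ (Fin k) →L[ℂ] EuclideanSpace ℂ (Fin k))).toLinearMap.comp
      (Matrix.toEuclideanLin :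
        Matrix (Fin k) (Fin k) ℂ ≃ₗ[ℂ] _).toLinearMap).continuous_of_finiteDimensional)
  exact hL.norm


/-- Proposition 2.5.  The homogeneous-interpolation ideal
`ℐ_𝔇 ⊂ (H^∞_1)^{k×k}` equals `B_𝔇 · H^∞_{r,(a,b)}` for a suitable normalized pair
`(a,b)` with `a` invertible and `aᴴ a + bᴴ b = I`. -/
theorem stmt12 (k n : ℕ) (hk : 1 ≤ k) (z : Fin n → ℂ)
    (hz : ∀ i, z i ∈ unitDisk) (hz0 : ∀ i, z i ≠ 0) (hinj : Function.Injective z) :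
    ∃ a b : Matrix (Fin k) (Fin k) ℂ, IsUnit a.det ∧ aᴴ * a + bᴴ * b = 1 ∧
      ∀ F : ℂ → Matrix (Fin k) (Fin k) ℂ,
        (MemHinf1 F ∧ ∀ i, F (z i) = 0) ↔
        (∃ G : ℂ → Matrix (Fin k) (Fin k) ℂ, matHol G ∧
          (∃ C : ℝ, ∀ ζ ∈ unitDisk, opNormM (G ζ) ≤ C) ∧
          (∃ U : Matrix (Fin k) (Fin k) ℂ, G 0 = a * U ∧ matDeriv G 0 = b * U) ∧
          ∀ ζ ∈ unitDisk, F ζ = BD z ζ • G ζ) := by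
  classical
  have hzd : ∀ i, ‖z i‖ < 1 := hz
  -- differentiability of BD on the disk
  have hBD_diff : ∀ ζ ∈ unitDisk, DifferentiableAt ℂ (BD z) ζ := by
    intro ζ hζ
    have : DifferentiableAt ℂ (fun w => ∏ i, (w - z i) / (1 - conj (z i) * w)) ζ := by
      apply DifferentiableAt.fun_finsetProd
      intro i _
      exact (differentiableAt_id.sub_const (z i)).div
        ((differentiableAt_const (1:ℂ)).sub ((differentiableAt_const (conj (z i))).mul
          differentiableAt_id)) (denom_ne_zero (hzd i) hζ)
    exact this
  set c : ℂ := BD z 0 with hcdef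
  have hc0 : c ≠ 0 := by
    rw [hcdef]
    unfold BD
    apply Finset.prod_ne_zero_iff.mpr
    intro i _
    simp only [mul_zero, sub_zero, zero_sub]
    exact div_ne_zero (neg_ne_zero.mpr (hz0 i)) one_ne_zero
  set d0 : ℂ := deriv (BD z) 0 with hd0def
  set μ : ℂ := -d0 / c with hμdef
  have hkey : d0 + c * μ = 0 := by
    rw [hμdef]
    field_simp
    ring
  set X : ℝ := 1 + ‖μ‖ ^ 2 with hXdef
  have hXpos : 0 < X := by positivity
  set t : ℝ := (Real.sqrt X)⁻¹ with htdef
  have ht0 : 0 < t := by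
    rw [htdef]
    exact inv_pos.mpr (Real.sqrt_pos.mpr hXpos)
  have htC : (t : ℂ) ≠ 0 := Complex.ofReal_ne_zero.mpr ht0.ne'
  have hts : t ^ 2 * X = 1 := by
    rw [htdef, inv_pow, Real.sq_sqrt hXpos.le]
    exact inv_mul_cancel₀ hXpos.ne'
  -- the matrices a and b
  refine ⟨(t : ℂ) • 1, ((t : ℂ) * μ) • 1, ?_, ?_, ?_⟩
  · rw [Matrix.det_smul, Matrix.det_one, mul_one]
    exact isUnit_iff_ne_zero.mpr (pow_ne_zero _ htC)
  · have hμc : μ * conj μ = ((‖μ‖ ^ 2 : ℝ) : ℂ) := by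
      rw [Complex.mul_conj]
      norm_cast
      exact (Complex.sq_norm μ).symm
    have htsC : ((t : ℂ)) ^ 2 * (1 + ((‖μ‖ ^ 2 : ℝ) : ℂ)) = 1 := by
      have h := congrArg (fun x : ℝ => (x : ℂ)) hts
      rw [hXdef] at h
      push_cast at h
      push_cast
      linear_combination h
    rw [Matrix.conjTranspose_smul, Matrix.conjTranspose_smul, Matrix.conjTranspose_one]
    rw [Matrix.smul_mul, Matrix.mul_smul, Matrix.smul_mul, Matrix.mul_smul, Matrix.one_mul,
      smul_smul, smul_smul, ← add_smul]
    have hcoef : star ((t : ℂ)) * (t : ℂ) + star ((t : ℂ) * μ) * ((t : ℂ) * μ) = 1 := by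
      simp only [star_mul', RCLike.star_def, Complex.conj_ofReal]
      linear_combination htsC + ((t:ℂ))^2 * hμc
    rw [hcoef, one_smul]
  intro F
  -- common facts
  have hBDz : ∀ i, BD z (z i) = 0 := by
    intro i
    unfold BD
    exact Finset.prod_eq_zero (Finset.mem_univ i) (by simp)
  have hqne : ∀ ζ ∈ unitDisk, (∏ l, (1 - conj (z l) * ζ)) ≠ 0 := by
    intro ζ hζ
    exact Finset.prod_ne_zero_iff.mpr fun l _ => denom_ne_zero (hzd l) hζ
  have hBDpq : ∀ ζ : ℂ, BD z ζ = (∏ l, (ζ - z l)) / (∏ l, (1 - conj (z l) * ζ)) := by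
    intro ζ
    unfold BD
    exact Finset.prod_div_distrib _ _
  have hqdiff : Differentiable ℂ fun ζ : ℂ => ∏ l, (1 - conj (z l) * ζ) := by
    apply Differentiable.fun_finsetProd
    intro l _
    exact (differentiable_const (1:ℂ)).sub ((differentiable_const (conj (z l))).mul
      differentiable_id)
  -- derivative of a product with BD at 0
  have hderiv_prod : ∀ g : ℂ → ℂ, DifferentiableAt ℂ g 0 →
      deriv (fun ζ => BD z ζ * g ζ) 0 = d0 * g 0 + c * deriv g 0 := by
    intro g hg
    rw [deriv_fun_mul (hBD_diff 0 zero_mem_unitDisk) hg, hd0def, hcdef]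
  constructor
  · -- forward direction
    rintro ⟨⟨⟨hFhol, C, hFb⟩, hFder⟩, hFz⟩
    have hent : ∀ i j : Fin k, ∃ g : ℂ → ℂ, DifferentiableOn ℂ g unitDisk ∧
        ∀ ζ, F ζ i j = (∏ l, (ζ - z l)) * g ζ := by
      intro i j
      apply factor_out n z (fun ζ => F ζ i j) hz hinj (hFhol i j)
      intro l
      rw [hFz l]
      exact Matrix.zero_apply i j
    choose g hg hfg using hent
    set G : ℂ → Matrix (Fin k) (Fin k) ℂ :=
      fun ζ => Matrix.of fun i j => (∏ l, (1 - conj (z l) * ζ)) * g i j ζ with hGdef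
    have hGhol : matHol G := by
      intro i j
      exact (hqdiff.differentiableOn).mul (hg i j)
    have hFG : ∀ ζ ∈ unitDisk, F ζ = BD z ζ • G ζ := by
      intro ζ hζ
      ext i j
      rw [Matrix.smul_apply]
      show F ζ i j = BD z ζ * ((∏ l, (1 - conj (z l) * ζ)) * g i j ζ)
      rw [hfg i j ζ, ← mul_assoc, hBDpq ζ, div_mul_cancel₀ _ (hqne ζ hζ)]
    -- boundedness of G
    have hbound : ∃ C' : ℝ, ∀ ζ ∈ unitDisk, opNormM (G ζ) ≤ C' := by
      -- a radius r₀ < 1 beyond all the z i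
      obtain ⟨r, hr0, hr1, hri⟩ : ∃ r : ℝ, 0 ≤ r ∧ r < 1 ∧ ∀ i, ‖z i‖ ≤ r := by
        refine ⟨(Finset.univ.sup fun i => (⟨‖z i‖, norm_nonneg _⟩ :
          NNReal) : NNReal), NNReal.coe_nonneg _, ?_, ?_⟩
        · have : (Finset.univ.sup fun i => (⟨‖z i‖, norm_nonneg _⟩ :
              NNReal)) < 1 := by
            apply Finset.sup_lt_iff (show (⊥ : NNReal) < 1 by norm_num) |>.mpr
            intro i _
            exact_mod_cast hzd i
          exact_mod_cast this
        · intro i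
          exact_mod_cast Finset.le_sup (f := fun i => (⟨‖z i‖,
            norm_nonneg _⟩ : NNReal)) (Finset.mem_univ i)
      set r₀ : ℝ := (1 + r) / 2 with hr₀def
      have hrr₀ : r < r₀ := by rw [hr₀def]; linarith
      have hr₀1 : r₀ < 1 := by rw [hr₀def]; linarith
      have hr₀0 : 0 < r₀ := by rw [hr₀def]; linarith
      set δ : ℝ := ∏ i, (r₀ - ‖z i‖) / 2 with hδdef
      have hδpos : 0 < δ := by
        rw [hδdef]
        apply Finset.prod_pos
        intro i _
        have h1 := hri i
        linarith [hrr₀]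
      -- lower bound for |BD| on the annulus
      have hann : ∀ ζ : ℂ, ‖ζ‖ < 1 → r₀ ≤ ‖ζ‖ →
          δ ≤ ‖BD z ζ‖ := by
        intro ζ hζ1 hζr
        unfold BD
        rw [norm_prod]
        rw [hδdef]
        apply Finset.prod_le_prod
        · intro i _
          have := hri i
          linarith [hrr₀]
        · intro i _
          rw [norm_div]
          have hnum : r₀ - ‖z i‖ ≤ ‖ζ - z i‖ := by
            have h1 : ‖ζ‖ - ‖z i‖ ≤ ‖ζ - z i‖ := by
              simpa using norm_sub_norm_le ζ (z i)
            linarith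
          have hden2 : ‖1 - conj (z i) * ζ‖ ≤ 2 := by
            calc ‖1 - conj (z i) * ζ‖ ≤
                ‖(1:ℂ)‖ + ‖conj (z i) * ζ‖ := by
                  simpa using norm_sub_le (1:ℂ) (conj (z i) * ζ)
            _ ≤ 1 + 1 := by
                simp only [norm_one, norm_mul, Complex.norm_conj]
                have : ‖z i‖ * ‖ζ‖ ≤ 1 * 1 :=
                  mul_le_mul (hzd i).le hζ1.le (norm_nonneg _) zero_le_one
                linarith
            _ = 2 := by norm_num
          have hdenpos : 0 < ‖1 - conj (z i) * ζ‖ :=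
            norm_pos_iff.mpr (denom_ne_zero (hzd i) hζ1)
          exact div_le_div₀ (norm_nonneg _) hnum hdenpos hden2
      -- compact part
      set K : Set ℂ := Metric.closedBall (0 : ℂ) r₀ with hKdef
      have hKsub : K ⊆ unitDisk := by
        intro ζ hζ
        rw [hKdef, Metric.mem_closedBall, Complex.dist_eq, sub_zero] at hζ
        exact lt_of_le_of_lt hζ hr₀1
      have hGcont : ContinuousOn G K := by
        apply continuousOn_pi.mpr
        intro i
        apply continuousOn_pi.mpr
        intro j
        exact ((hGhol i j).continuousOn).mono hKsub
      obtain ⟨C₁, hC₁⟩ := (isCompact_closedBall (0:ℂ) r₀).exists_bound_of_continuousOn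
        ((continuous_opNormM).comp_continuousOn hGcont)
      refine ⟨max C₁ (C / δ), ?_⟩
      intro ζ hζ
      by_cases hcase : ‖ζ‖ ≤ r₀
      · have hζK : ζ ∈ K := by
          rw [hKdef, Metric.mem_closedBall, Complex.dist_eq, sub_zero]
          exact hcase
        calc opNormM (G ζ) ≤ ‖opNormM (G ζ)‖ := le_abs_self _
        _ ≤ C₁ := hC₁ ζ hζK
        _ ≤ max C₁ (C / δ) := le_max_left _ _
      · push_neg at hcase
        have hζ1 : ‖ζ‖ < 1 := hζ
        have hBDlow := hann ζ hζ1 hcase.le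
        have hFζ : opNormM (F ζ) = ‖BD z ζ‖ * opNormM (G ζ) := by
          rw [hFG ζ hζ, opNormM_smul]
        have : opNormM (G ζ) ≤ C / δ := by
          rw [le_div_iff₀ hδpos]
          calc opNormM (G ζ) * δ ≤ opNormM (G ζ) * ‖BD z ζ‖ :=
            mul_le_mul_of_nonneg_left hBDlow (opNormM_nonneg _)
          _ = opNormM (F ζ) := by rw [hFζ, mul_comm]
          _ ≤ C := hFb ζ hζ
        exact le_trans this (le_max_right _ _)
    -- the constraint at 0
    have hG0der : ∀ i j : Fin k, deriv (fun ζ => G ζ i j) 0 = μ * G 0 i j := by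
      intro i j
      have hGd : DifferentiableAt ℂ (fun ζ => G ζ i j) 0 :=
        (hGhol i j).differentiableAt (isOpen_unitDisk.mem_nhds zero_mem_unitDisk)
      have hev : (fun ζ => F ζ i j) =ᶠ[nhds (0:ℂ)] fun ζ => BD z ζ * G ζ i j := by
        apply Filter.eventuallyEq_of_mem (isOpen_unitDisk.mem_nhds zero_mem_unitDisk)
        intro ζ hζ
        show F ζ i j = BD z ζ * G ζ i j
        rw [hFG ζ hζ]
        simp [Matrix.smul_apply]
      have hder0 : deriv (fun ζ => F ζ i j) 0 = 0 := by
        simpa [matDeriv] using congrFun (congrFun hFder i) j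
      have heq : d0 * G 0 i j + c * deriv (fun ζ => G ζ i j) 0 = 0 := by
        rw [← hderiv_prod _ hGd, ← hev.deriv_eq, hder0]
      rw [hμdef, div_mul_eq_mul_div, eq_div_iff hc0]
      linear_combination heq
    refine ⟨G, hGhol, hbound, ⟨(t : ℂ)⁻¹ • G 0, ?_, ?_⟩, hFG⟩
    · rw [Matrix.smul_mul, Matrix.mul_smul, Matrix.one_mul, smul_smul,
        mul_inv_cancel₀ htC, one_smul]
    · have hsc : (((t : ℂ) * μ) • (1 : Matrix (Fin k) (Fin k) ℂ)) * ((t : ℂ)⁻¹ • G 0)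
          = μ • G 0 := by
        rw [Matrix.smul_mul, Matrix.mul_smul, Matrix.one_mul, smul_smul]
        congr 1
        field_simp
      rw [hsc]
      ext i j
      show deriv (fun ζ => G ζ i j) 0 = (μ • G 0) i j
      rw [hG0der i j]
      simp [Matrix.smul_apply]
  · -- backward direction
    rintro ⟨G, hGhol, ⟨C, hGb⟩, ⟨U, hU0, hU1⟩, hFG⟩
    have hBDle : ∀ ζ ∈ unitDisk, ‖BD z ζ‖ ≤ 1 := by
      intro ζ hζ
      unfold BD
      rw [norm_prod]
      apply Finset.prod_le_one
      · intro i _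
        exact norm_nonneg _
      · intro i _
        exact blaschke_abs_le (hzd i) hζ
    have hBDdiffOn : DifferentiableOn ℂ (BD z) unitDisk :=
      fun ζ hζ => (hBD_diff ζ hζ).differentiableWithinAt
    refine ⟨⟨⟨?_, ?_⟩, ?_⟩, ?_⟩
    · -- matHol F
      intro i j
      apply DifferentiableOn.congr (f := fun ζ => BD z ζ * G ζ i j)
      · exact hBDdiffOn.mul (hGhol i j)
      · intro ζ hζ
        show F ζ i j = BD z ζ * G ζ i j
        rw [hFG ζ hζ]
        simp [Matrix.smul_apply]
    · -- bounded
      refine ⟨max C 0, ?_⟩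
      intro ζ hζ
      rw [hFG ζ hζ, opNormM_smul]
      calc ‖BD z ζ‖ * opNormM (G ζ)
          ≤ 1 * max C 0 :=
            mul_le_mul (hBDle ζ hζ) (le_trans (hGb ζ hζ) (le_max_left _ _))
              (opNormM_nonneg _) zero_le_one
        _ = max C 0 := one_mul _
    · -- matDeriv F 0 = 0
      have hG0 : G 0 = (t : ℂ) • U := by
        rw [hU0, Matrix.smul_mul, Matrix.one_mul]
      have hGd0 : matDeriv G 0 = ((t : ℂ) * μ) • U := by
        rw [hU1, Matrix.smul_mul, Matrix.one_mul]
      ext i j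
      show deriv (fun ζ => F ζ i j) 0 = (0 : Matrix (Fin k) (Fin k) ℂ) i j
      rw [Matrix.zero_apply]
      have hGd : DifferentiableAt ℂ (fun ζ => G ζ i j) 0 :=
        (hGhol i j).differentiableAt (isOpen_unitDisk.mem_nhds zero_mem_unitDisk)
      have hev : (fun ζ => F ζ i j) =ᶠ[nhds (0:ℂ)] fun ζ => BD z ζ * G ζ i j := by
        apply Filter.eventuallyEq_of_mem (isOpen_unitDisk.mem_nhds zero_mem_unitDisk)
        intro ζ hζ
        show F ζ i j = BD z ζ * G ζ i j
        rw [hFG ζ hζ]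
        simp [Matrix.smul_apply]
      rw [hev.deriv_eq, hderiv_prod _ hGd]
      have h1 : G 0 i j = (t : ℂ) * U i j := by rw [hG0]; exact Matrix.smul_apply _ _ _ _
      have h2 : deriv (fun ζ => G ζ i j) 0 = (t : ℂ) * μ * U i j := by
        have : matDeriv G 0 i j = ((t : ℂ) * μ) * U i j := by
          rw [hGd0]; exact Matrix.smul_apply _ _ _ _
        simpa [matDeriv] using this
      rw [h1, h2]
      linear_combination (t : ℂ) * U i j * hkey
    · -- vanishing at the z i
      intro i
      rw [hFG (z i) (hz i), hBDz i, zero_smul]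

end CNP
end
end

section
/- Let z₁, w₁ ∈ ℂ with |z₁| < 1 and |w₁| < 1. Set c = w₁·(1 − |z₁|⁴)/(1 − |z₁|⁴·|w₁|²) and r = |z₁|²·(1 − |w₁|²)/(1 − |z₁|⁴·|w₁|²). Then |c| + r < 1; in particular the closed disk {x ∈ ℂ : |x − c| ≤ r} is contained in the open unit disk 𝔻. -/
open scoped ComplexConjugate ComplexOrder
open Matrix

noncomputable section

namespace CNP

/-- The disk of admissible parameters for the one-point constrained
Nevanlinna-Pick problem is contained in the open unit disk: `|c| + r < 1`. -/
theorem stmt19 (z₁ w₁ : ℂ) (hz : ‖z₁‖ < 1) (hw : ‖w₁‖ < 1)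
    (c : ℂ) (r : ℝ)
    (hc : c = w₁ * ((1 - ‖z₁‖ ^ 4 : ℝ) : ℂ) /
      ((1 - ‖z₁‖ ^ 4 * ‖w₁‖ ^ 2 : ℝ) : ℂ))
    (hr : r = ‖z₁‖ ^ 2 * (1 - ‖w₁‖ ^ 2) /
      (1 - ‖z₁‖ ^ 4 * ‖w₁‖ ^ 2)) :
    ‖c‖ + r < 1 ∧ {x : ℂ | ‖x - c‖ ≤ r} ⊆ unitDisk := by
  set A := ‖z₁‖ with hAdef
  set B := ‖w₁‖ with hBdef
  have hA0 : 0 ≤ A := norm_nonneg _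
  have hB0 : 0 ≤ B := norm_nonneg _
  have hA4 : A ^ 4 < 1 := pow_lt_one₀ hA0 hz (by norm_num)
  have hB2 : B ^ 2 < 1 := pow_lt_one₀ hB0 hw (by norm_num)
  have hA4n : 0 ≤ A ^ 4 := pow_nonneg hA0 4
  have hB2n : 0 ≤ B ^ 2 := pow_nonneg hB0 2
  have hD : 0 < 1 - A ^ 4 * B ^ 2 := by nlinarith
  have hN : 0 ≤ 1 - A ^ 4 := by nlinarith
  have habs : ‖c‖ = B * (1 - A ^ 4) / (1 - A ^ 4 * B ^ 2) := by
    rw [hc, norm_div, norm_mul, Complex.norm_real, Complex.norm_real, Real.norm_eq_abs, Real.norm_eq_abs,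
      abs_of_nonneg hN, abs_of_pos hD]
  have key : ‖c‖ + r < 1 := by
    rw [habs, hr, ← add_div, div_lt_one hD]
    have hA2 : A ^ 2 < 1 := pow_lt_one₀ hA0 hz (by norm_num)
    have hab : A ^ 2 * B < 1 := by nlinarith [mul_nonneg (pow_nonneg hA0 2) hB0]
    have h1 : 0 < (1 - A ^ 2) * (1 - B) * (1 - A ^ 2 * B) :=
      mul_pos (mul_pos (by linarith) (by linarith)) (by linarith)
    nlinarith [h1]
  refine ⟨key, fun x hx => ?_⟩
  have htri : ‖x‖ ≤ ‖x - c‖ + ‖c‖ := by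
    simpa using norm_sub_le_norm_sub_add_norm_sub x c 0
  simp only [Set.mem_setOf_eq] at hx
  simp only [unitDisk, Set.mem_setOf_eq]
  linarith

end CNP
end
end
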